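/- For every integer s ≥ 3 one has P(s, 2^{s-1} − 2) = 2^s − 4; that is, there exists an s-by-(2^s − 4) matrix over F_2 that is a (2^{s-1} − 2)-PIR generator matrix, and no such matrix with fewer than 2^s − 4 columns exists. -/

import Mathlib

/-- An `s × n` matrix `G` over `𝔽₂` is a `k`-PIR generator matrix if for every
index `i` there exist `k` pairwise disjoint recovery sets of column indices,
each of whose column sums equals the `i`-th standard unit vector. -/
def IsPIRMatrix (s n k : ℕ) (G : Matrix (Fin s) (Fin n) (ZMod 2)) : Prop :=
  ∀ i : Fin s, ∃ R : Fin k → Finset (Fin n),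
    (∀ j j' : Fin k, j ≠ j' → Disjoint (R j) (R j')) ∧
    ∀ j : Fin k, (∑ h ∈ R j, fun r : Fin s => G r h) = Pi.single i 1

/-- `PIRlen s k` is the smallest positive `n` for which an `s × n` `k`-PIR
generator matrix over `𝔽₂` exists. -/
noncomputable def PIRlen (s k : ℕ) : ℕ :=
  sInf {n : ℕ | 0 < n ∧ ∃ G : Matrix (Fin s) (Fin n) (ZMod 2), IsPIRMatrix s n k G}

theorem test : True := trivial


lemma zmod2_ne_zero {x : ZMod 2} (h : x ≠ 0) : x = 1 := by
  revert h; revert x; decide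

/-- every nonzero functional hits at least k columns -/
lemma count_lb {s n k : ℕ} {G : Matrix (Fin s) (Fin n) (ZMod 2)}
    (hG : IsPIRMatrix s n k G) (u : Fin s → ZMod 2) (hu : u ≠ 0) :
    k ≤ (Finset.univ.filter (fun h : Fin n => (∑ r, u r * G r h) = 1)).card := by
  obtain ⟨i, hi⟩ : ∃ i, u i ≠ 0 := by
    by_contra hc; push_neg at hc; exact hu (funext hc)
  obtain ⟨R, hdisj, hsum⟩ := hG i
  have hone : ∀ j : Fin k, ∃ h ∈ R j, (∑ r, u r * G r h) = 1 := by
    intro j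
    have hsumval : (∑ h ∈ R j, ∑ r, u r * G r h) = 1 := by
      rw [Finset.sum_comm]
      have hr : ∀ r, (∑ h ∈ R j, u r * G r h) = u r * (Pi.single i 1 : Fin s → ZMod 2) r := by
        intro r
        rw [← Finset.mul_sum]
        have h2 := congrFun (hsum j) r
        rw [Finset.sum_apply] at h2
        rw [h2]
      rw [Finset.sum_congr rfl (fun r _ => hr r)]
      rw [Finset.sum_eq_single i]
      · rw [Pi.single_eq_same, mul_one, zmod2_ne_zero hi]
      · intro b _ hb; rw [Pi.single_eq_of_ne hb, mul_zero]
      · intro h; exact absurd (Finset.mem_univ i) h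
    by_contra hc
    push_neg at hc
    have hz : ∀ h ∈ R j, (∑ r, u r * G r h) = 0 := by
      intro h hh
      by_contra hz'
      exact hc h hh (zmod2_ne_zero hz')
    rw [Finset.sum_congr rfl hz, Finset.sum_const_zero] at hsumval
    exact one_ne_zero hsumval.symm
  choose g hg1 hg2 using hone
  have : (Finset.univ : Finset (Fin k)).card ≤ (Finset.univ.filter (fun h : Fin n => (∑ r, u r * G r h) = 1)).card := by
    apply Finset.card_le_card_of_injOn g
    · intro j _; exact Finset.mem_coe.mpr (Finset.mem_filter.mpr ⟨Finset.mem_univ _, hg2 j⟩)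
    · intro j _ j' _ hjj
      by_contra hne
      have := hdisj j j' hne
      exact (Finset.disjoint_left.mp this (hg1 j)) (hjj ▸ hg1 j')
  simpa using this

/-- per-column count of functionals hitting it -/
lemma col_count_ub {s : ℕ} (hs : 1 ≤ s) (c : Fin s → ZMod 2) :
    (Finset.univ.filter (fun u : Fin s → ZMod 2 => (∑ r, u r * c r) = 1)).card ≤ 2 ^ (s - 1) := by
  by_cases hc : c = 0
  · subst hc
    simp
  · obtain ⟨i0, hi0⟩ : ∃ i, c i ≠ 0 := by
      by_contra h; push_neg at h; exact hc (funext h)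
    set B1 := Finset.univ.filter (fun u : Fin s → ZMod 2 => (∑ r, u r * c r) = 1) with hB1
    set B0 := Finset.univ.filter (fun u : Fin s → ZMod 2 => (∑ r, u r * c r) = 0) with hB0
    have hmap : ∀ u ∈ B1, (u + (Pi.single i0 1 : Fin s → ZMod 2)) ∈ B0 := by
      intro u hu
      simp only [hB1, hB0, Finset.mem_filter, Finset.mem_univ, true_and] at hu ⊢
      have : (∑ r, (u + (Pi.single i0 1 : Fin s → ZMod 2)) r * c r) = (∑ r, u r * c r) + ∑ r, (Pi.single i0 1 : Fin s → ZMod 2) r * c r := by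
        rw [← Finset.sum_add_distrib]
        congr 1; funext r; simp [add_mul]
      rw [this, hu]
      have : (∑ r, (Pi.single i0 1 : Fin s → ZMod 2) r * c r) = c i0 := by
        rw [Finset.sum_eq_single i0]
        · simp
        · intro b _ hb; rw [Pi.single_eq_of_ne hb, zero_mul]
        · intro h; exact absurd (Finset.mem_univ i0) h
      rw [this, zmod2_ne_zero hi0]
      decide
    have hcard : B1.card ≤ B0.card := by
      apply Finset.card_le_card_of_injOn _ hmap
      intro u _ v _ h
      have := congrArg (· + Pi.single i0 (1:ZMod 2)) h
      simpa [add_assoc, CharTwo.add_self_eq_zero] using this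
    have hdis : Disjoint B1 B0 := by
      rw [Finset.disjoint_left]
      intro u h1 h0
      simp only [hB1, hB0, Finset.mem_filter] at h1 h0
      rw [h1.2] at h0
      exact one_ne_zero h0.2
    have huni : B1 ∪ B0 = Finset.univ := by
      ext u
      simp only [Finset.mem_union, hB1, hB0, Finset.mem_filter, Finset.mem_univ, true_and, iff_true]
      by_cases h : (∑ r, u r * c r) = 0
      · right; exact h
      · left; exact zmod2_ne_zero h
    have htot : B1.card + B0.card = 2 ^ s := by
      rw [← Finset.card_union_of_disjoint hdis, huni, Finset.card_univ]
      simp [Fintype.card_fun]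
    have : 2 * B1.card ≤ 2 ^ s := by omega
    have h2 : (2:ℕ) ^ s = 2 * 2 ^ (s - 1) := by
      conv_lhs => rw [show s = (s-1)+1 by omega]
      ring
    omega

lemma lower_bound {s n : ℕ} (hs : 3 ≤ s) (G : Matrix (Fin s) (Fin n) (ZMod 2))
    (hG : IsPIRMatrix s n (2 ^ (s - 1) - 2) G) : 2 ^ s - 4 ≤ n := by
  set k := 2 ^ (s - 1) - 2 with hk
  set A := Finset.univ.filter (fun u : Fin s → ZMod 2 => u ≠ 0) with hA
  have hAcard : A.card = 2 ^ s - 1 := by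
    rw [hA, Finset.filter_ne']
    rw [Finset.card_erase_of_mem (Finset.mem_univ _), Finset.card_univ]
    simp [Fintype.card_fun]
  have key : A.card * k ≤ n * 2 ^ (s - 1) := by
    calc A.card * k = ∑ _u ∈ A, k := by rw [Finset.sum_const, smul_eq_mul]
    _ ≤ ∑ u ∈ A, (Finset.univ.filter (fun h : Fin n => (∑ r, u r * G r h) = 1)).card := by
        apply Finset.sum_le_sum
        intro u hu
        exact count_lb hG u (by simpa [hA] using hu)
    _ = ∑ u ∈ A, ∑ h : Fin n, (if (∑ r, u r * G r h) = 1 then 1 else 0) := by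
        apply Finset.sum_congr rfl; intro u _
        rw [Finset.card_filter]
    _ = ∑ h : Fin n, ∑ u ∈ A, (if (∑ r, u r * G r h) = 1 then 1 else 0) := Finset.sum_comm
    _ ≤ ∑ _h : Fin n, 2 ^ (s - 1) := by
        apply Finset.sum_le_sum
        intro h _
        calc (∑ u ∈ A, if (∑ r, u r * G r h) = 1 then 1 else 0)
            ≤ ∑ u : Fin s → ZMod 2, (if (∑ r, u r * G r h) = 1 then 1 else 0) := by
              apply Finset.sum_le_sum_of_subset (Finset.filter_subset _ _)
          _ = (Finset.univ.filter (fun u : Fin s → ZMod 2 => (∑ r, u r * G r h) = 1)).card := by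
              rw [Finset.card_filter]
          _ ≤ 2 ^ (s - 1) := col_count_ub (by omega) _
    _ = n * 2 ^ (s - 1) := by simp [mul_comm]
  rw [hAcard] at key
  set t := 2 ^ (s - 1) with ht
  have ht4 : 4 ≤ t := by
    rw [ht]
    calc (4:ℕ) = 2 ^ 2 := rfl
    _ ≤ 2 ^ (s-1) := Nat.pow_le_pow_right (by omega) (by omega)
  have h2s : 2 ^ s = 2 * t := by
    rw [ht]
    conv_lhs => rw [show s = (s-1)+1 by omega]
    ring
  rw [h2s] at key ⊢
  by_contra hcon
  push_neg at hcon
  have hn : n ≤ 2 * t - 5 := by omega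
  have : (2 * t - 1) * (t - 2) ≤ (2 * t - 5) * t :=
    le_trans key (Nat.mul_le_mul_right t hn)
  zify [show 1 ≤ 2*t by omega, show 2 ≤ t by omega, show 5 ≤ 2*t by omega] at this
  nlinarith [this]


lemma exists_pairs {α : Type*} [DecidableEq α] (f : α → α) (hf : ∀ v, f (f v) = v)
    (hnf : ∀ v, f v ≠ v) :
    ∀ (m : ℕ) (T : Finset α), (∀ v ∈ T, f v ∈ T) → T.card = 2 * m →
    ∃ R : Fin m → Finset α,
      (∀ j j', j ≠ j' → Disjoint (R j) (R j')) ∧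
      (∀ j, ∃ v, v ∈ T ∧ R j = {v, f v}) := by
  intro m
  induction m with
  | zero =>
    intro T _ _
    exact ⟨fun j => j.elim0, fun j => j.elim0, fun j => j.elim0⟩
  | succ m ih =>
    intro T hclosed hcard
    obtain ⟨v, hv⟩ : T.Nonempty := Finset.card_pos.mp (by omega)
    have hfv : f v ∈ T := hclosed v hv
    have hvfv : v ≠ f v := fun h => hnf v h.symm
    set T' := T \ {v, f v} with hT'
    have hsub : ({v, f v} : Finset α) ⊆ T := by
      intro x hx
      simp only [Finset.mem_insert, Finset.mem_singleton] at hx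
      rcases hx with rfl | rfl <;> assumption
    have hpcard : ({v, f v} : Finset α).card = 2 := by
      rw [Finset.card_insert_of_notMem (by simpa using hvfv), Finset.card_singleton]
    have hT'card : T'.card = 2 * m := by
      rw [hT', Finset.card_sdiff_of_subset hsub, hpcard, hcard]; omega
    have hT'closed : ∀ w ∈ T', f w ∈ T' := by
      intro w hw
      simp only [hT', Finset.mem_sdiff, Finset.mem_insert, Finset.mem_singleton] at hw ⊢
      push_neg at hw ⊢
      refine ⟨hclosed w hw.1, ?_, ?_⟩
      · intro h; exact hw.2.2 (by rw [← h, hf])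
      · intro h; exact hw.2.1 (by have := congrArg f h; rwa [hf, hf] at this)
    obtain ⟨R', hd', hp'⟩ := ih T' hT'closed hT'card
    have hblock : ∀ jj : Fin m, Disjoint ({v, f v} : Finset α) (R' jj) := by
      intro jj
      obtain ⟨w, hw, hweq⟩ := hp' jj
      have hfw : f w ∈ T' := hT'closed w hw
      rw [hweq, Finset.disjoint_left]
      intro x hx hx2
      have hxT' : x ∈ T' := by
        simp only [Finset.mem_insert, Finset.mem_singleton] at hx2
        rcases hx2 with rfl | rfl
        · exact hw
        · exact hfw
      simp only [hT', Finset.mem_sdiff] at hxT'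
      exact hxT'.2 hx
    refine ⟨Fin.cons {v, f v} R', ?_, ?_⟩
    · intro j j' hjj
      induction j using Fin.cases with
      | zero =>
        induction j' using Fin.cases with
        | zero => exact absurd rfl hjj
        | succ j' => simpa using hblock j'
      | succ j =>
        induction j' using Fin.cases with
        | zero => simpa using (hblock j).symm
        | succ j' =>
          simpa using hd' j j' (fun h => hjj (by rw [h]))
    · intro j
      induction j using Fin.cases with
      | zero => exact ⟨v, hv, by simp⟩
      | succ j =>
        obtain ⟨w, hw, he⟩ := hp' j
        exact ⟨w, (Finset.mem_sdiff.mp hw).1, by simpa using he⟩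

lemma upper_exists {s : ℕ} (hs : 3 ≤ s) :
    ∃ G : Matrix (Fin s) (Fin (2 ^ s - 4)) (ZMod 2),
      IsPIRMatrix s (2 ^ s - 4) (2 ^ (s - 1) - 2) G := by
  have h2s : (2:ℕ) ^ s = 2 * 2 ^ (s - 1) := by
    conv_lhs => rw [show s = (s-1)+1 by omega]
    rw [pow_succ]; ring
  have ht4 : 4 ≤ 2 ^ (s - 1) := by
    calc (4:ℕ) = 2 ^ 2 := rfl
    _ ≤ 2 ^ (s-1) := Nat.pow_le_pow_right (by omega) (by omega)
  set k := 2 ^ (s - 1) - 2 with hk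
  set N := 2 ^ s - 4 with hN
  have hNk : N = 2 * k := by omega
  -- the ambient vector space
  have addself : ∀ x : Fin s → ZMod 2, x + x = 0 := by
    intro x; funext r; exact CharTwo.add_self_eq_zero _
  have single_ne_zero : ∀ i : Fin s, (Pi.single i 1 : Fin s → ZMod 2) ≠ 0 := by
    intro i h
    have := congrFun h i
    simp at this
  have single_ne : ∀ i i' : Fin s, i ≠ i' →
      (Pi.single i 1 : Fin s → ZMod 2) ≠ Pi.single i' 1 := by
    intro i i' hne h
    have := congrFun h i
    rw [Pi.single_eq_same, Pi.single_eq_of_ne hne] at this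
    exact one_ne_zero this
  set i0 : Fin s := ⟨0, by omega⟩ with hi0
  set i1 : Fin s := ⟨1, by omega⟩ with hi1
  have hi01 : i0 ≠ i1 := by simp [hi0, hi1, Fin.ext_iff]
  set a : Fin s → ZMod 2 := Pi.single i0 1 with ha
  set b : Fin s → ZMod 2 := Pi.single i1 1 with hb
  set c : Fin s → ZMod 2 := a + b with hc
  have ha0 : a ≠ 0 := single_ne_zero i0
  have hb0 : b ≠ 0 := single_ne_zero i1
  have hab : a ≠ b := single_ne i0 i1 hi01
  have hc0 : c ≠ 0 := by
    intro h
    have : a = b := by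
      have := congrArg (· + b) h
      simpa [hc, add_assoc, addself, zero_add] using this
    exact hab this
  have hac : a ≠ c := by
    intro h
    have := congrArg (a + ·) h
    simp only [hc] at this
    rw [addself, ← add_assoc, addself, zero_add] at this
    exact hb0 this.symm
  have hbc : b ≠ c := by
    intro h
    have := congrArg (· + b) h
    simp only [hc] at this
    rw [addself, add_assoc, addself, add_zero] at this
    exact ha0 this.symm
  have habc : a + b = c := hc.symm
  have hacb : a + c = b := by rw [hc, ← add_assoc, addself, zero_add]
  have hbca : b + c = a := by rw [hc, add_comm a b, ← add_assoc, addself, zero_add]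
  -- the Klein subgroup
  set Q : Finset (Fin s → ZMod 2) := {0, a, b, c} with hQdef
  have hmemQ : ∀ x, x ∈ Q ↔ x = 0 ∨ x = a ∨ x = b ∨ x = c := by
    intro x; simp [hQdef]
  have Qclosed : ∀ x ∈ Q, ∀ y ∈ Q, x + y ∈ Q := by
    intro x hx y hy
    rw [hmemQ] at hx hy ⊢
    rcases hx with rfl|rfl|rfl|rfl <;> rcases hy with rfl|rfl|rfl|rfl <;>
      simp only [zero_add, add_zero, addself, habc, hacb, hbca,
        add_comm b a, add_comm c a, add_comm c b] <;>
      simp only [true_or, or_true]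
  have hQcard : Q.card = 4 := by
    have h1 : (0:Fin s → ZMod 2) ∉ ({a,b,c} : Finset _) := by
      simp only [Finset.mem_insert, Finset.mem_singleton]
      push_neg
      exact ⟨fun h => ha0 h.symm, fun h => hb0 h.symm, fun h => hc0 h.symm⟩
    have h2 : a ∉ ({b,c} : Finset _) := by
      simp only [Finset.mem_insert, Finset.mem_singleton]
      push_neg
      exact ⟨hab, hac⟩
    have h3 : b ∉ ({c} : Finset _) := by simpa using hbc
    rw [hQdef, Finset.card_insert_of_notMem h1, Finset.card_insert_of_notMem h2,
      Finset.card_insert_of_notMem h3, Finset.card_singleton]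
  -- the remaining columns
  set S : Finset (Fin s → ZMod 2) := Finset.univ \ Q with hSdef
  have hmemS : ∀ x, x ∈ S ↔ x ∉ Q := by intro x; simp [hSdef]
  have hcardV : Fintype.card (Fin s → ZMod 2) = 2 ^ s := by
    simp [Fintype.card_fun]
  have hScard : S.card = N := by
    rw [hSdef, Finset.card_sdiff_of_subset (Finset.subset_univ _), Finset.card_univ, hcardV, hQcard, hN]
  set e := Finset.equivFinOfCardEq hScard with he
  set G : Matrix (Fin s) (Fin N) (ZMod 2) := fun r h => (e.symm h : Fin s → ZMod 2) r with hG
  have liftsum : ∀ P : Finset (Fin s → ZMod 2), P ⊆ S →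
      (∑ h ∈ Finset.univ.filter (fun h : Fin N => (e.symm h : Fin s → ZMod 2) ∈ P),
        fun r : Fin s => G r h) = ∑ v ∈ P, v := by
    intro P hP
    apply Finset.sum_bij (fun h _ => (e.symm h : Fin s → ZMod 2))
    · intro h hh
      exact (Finset.mem_filter.mp hh).2
    · intro h1 _ h2 _ heq
      exact e.symm.injective (Subtype.ext heq)
    · intro v hv
      refine ⟨e ⟨v, hP hv⟩, ?_, ?_⟩
      · rw [Finset.mem_filter]
        refine ⟨Finset.mem_univ _, ?_⟩
        rw [Equiv.symm_apply_apply]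
        exact hv
      · rw [Equiv.symm_apply_apply]
    · intro h _
      funext r
      simp only [hG]
  have liftdisj : ∀ P P' : Finset (Fin s → ZMod 2), Disjoint P P' →
      Disjoint (Finset.univ.filter (fun h : Fin N => (e.symm h : Fin s → ZMod 2) ∈ P))
               (Finset.univ.filter (fun h : Fin N => (e.symm h : Fin s → ZMod 2) ∈ P')) := by
    intro P P' hPP
    rw [Finset.disjoint_left] at hPP ⊢
    intro x hx hx'
    exact hPP (Finset.mem_filter.mp hx).2 (Finset.mem_filter.mp hx').2
  refine ⟨G, ?_⟩
  intro i
  set u : Fin s → ZMod 2 := Pi.single i 1 with hu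
  have hu0 : u ≠ 0 := single_ne_zero i
  set f : (Fin s → ZMod 2) → (Fin s → ZMod 2) := fun v => v + u with hfdef
  have hff : ∀ v, f (f v) = v := by
    intro v; simp only [hfdef]; rw [add_assoc, addself, add_zero]
  have hnf : ∀ v, f v ≠ v := by
    intro v h
    apply hu0
    have h2 : v + u = v + 0 := by rw [add_zero]; exact h
    exact add_left_cancel h2
  have pair_sum : ∀ v : Fin s → ZMod 2, (∑ x ∈ ({v, f v} : Finset _), x) = u := by
    intro v
    rw [Finset.sum_pair (fun h => hnf v h.symm)]
    simp only [hfdef]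
    rw [← add_assoc, addself, zero_add]
  have haddcancel : ∀ x y : Fin s → ZMod 2, x + u = y + u → x = y := by
    intro x y h
    have h2 := congrArg (· + u) h
    rwa [add_assoc, addself, add_zero, add_assoc, addself, add_zero] at h2
  by_cases hQu : u ∈ Q
  · -- u ∈ {a,b,c}: S itself splits into k pairs
    have hclosed : ∀ v ∈ S, f v ∈ S := by
      intro v hv
      rw [hmemS] at hv ⊢
      intro hmem
      apply hv
      have h2 : v = f v + u := by simp only [hfdef]; rw [add_assoc, addself, add_zero]
      rw [h2]
      exact Qclosed _ hmem _ hQu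
    obtain ⟨R0, hd0, hp0⟩ := exists_pairs f hff hnf k S hclosed (by omega)
    refine ⟨fun j => Finset.univ.filter (fun h : Fin N => (e.symm h : Fin s → ZMod 2) ∈ R0 j),
      ?_, ?_⟩
    · intro j j' hjj
      exact liftdisj _ _ (hd0 j j' hjj)
    · intro j
      obtain ⟨v, hv, hveq⟩ := hp0 j
      have hsubS : R0 j ⊆ S := by
        rw [hveq]
        intro x hx
        simp only [Finset.mem_insert, Finset.mem_singleton] at hx
        rcases hx with rfl | rfl
        · exact hv
        · exact hclosed v hv
      rw [liftsum _ hsubS, hveq, pair_sum]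
  · -- u ∉ Q : remove the four exceptional columns, pair up the rest
    set E : Finset (Fin s → ZMod 2) := {u, a+u, b+u, c+u} with hEdef
    have hmemE : ∀ x, x ∈ E ↔ x = u ∨ x = a+u ∨ x = b+u ∨ x = c+u := by
      intro x; simp [hEdef]
    have hEnotQ : ∀ x ∈ E, x ∉ Q := by
      intro x hx hxQ
      rw [hmemE] at hx
      apply hQu
      have key : ∀ q ∈ Q, x = q + u → u ∈ Q := by
        intro q hq hxq
        have h2 : u = q + x := by rw [hxq, ← add_assoc, addself, zero_add]
        rw [h2]
        exact Qclosed q hq x hxQ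
      rcases hx with rfl|rfl|rfl|rfl
      · exact key 0 ((hmemQ 0).mpr (Or.inl rfl)) (zero_add u).symm
      · exact key a ((hmemQ a).mpr (Or.inr (Or.inl rfl))) rfl
      · exact key b ((hmemQ b).mpr (Or.inr (Or.inr (Or.inl rfl)))) rfl
      · exact key c ((hmemQ c).mpr (Or.inr (Or.inr (Or.inr rfl)))) rfl
    have hES : E ⊆ S := fun x hx => (hmemS x).mpr (hEnotQ x hx)
    have d1 : u ≠ a + u := fun h => ha0 (haddcancel a 0 (by rw [zero_add]; exact h.symm))
    have d2 : u ≠ b + u := fun h => hb0 (haddcancel b 0 (by rw [zero_add]; exact h.symm))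
    have d3 : u ≠ c + u := fun h => hc0 (haddcancel c 0 (by rw [zero_add]; exact h.symm))
    have d4 : a + u ≠ b + u := fun h => hab (haddcancel a b h)
    have d5 : a + u ≠ c + u := fun h => hac (haddcancel a c h)
    have d6 : b + u ≠ c + u := fun h => hbc (haddcancel b c h)
    have hEcard : E.card = 4 := by
      have h1 : u ∉ ({a+u, b+u, c+u} : Finset _) := by
        simp only [Finset.mem_insert, Finset.mem_singleton]
        push_neg
        exact ⟨d1, d2, d3⟩
      have h2 : a + u ∉ ({b+u, c+u} : Finset _) := by
        simp only [Finset.mem_insert, Finset.mem_singleton]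
        push_neg
        exact ⟨d4, d5⟩
      have h3 : b + u ∉ ({c+u} : Finset _) := by simpa using d6
      rw [hEdef, Finset.card_insert_of_notMem h1, Finset.card_insert_of_notMem h2,
        Finset.card_insert_of_notMem h3, Finset.card_singleton]
    set T := S \ E with hTdef
    have hTE : ∀ x ∈ T, x ∉ E := by
      intro x hx
      exact (Finset.mem_sdiff.mp hx).2
    have hTS : T ⊆ S := by rw [hTdef]; exact Finset.sdiff_subset
    have hTclosed : ∀ v ∈ T, f v ∈ T := by
      intro v hv
      rw [hTdef, Finset.mem_sdiff] at hv ⊢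
      obtain ⟨hvS, hvE⟩ := hv
      constructor
      · rw [hmemS] at hvS ⊢
        intro hfvQ
        apply hvE
        rw [hmemE]
        have hvq : v = (f v) + u := by simp only [hfdef]; rw [add_assoc, addself, add_zero]
        rw [hmemQ] at hfvQ
        rcases hfvQ with h|h|h|h
        · exact Or.inl (by rw [hvq, h, zero_add])
        · exact Or.inr (Or.inl (by rw [hvq, h]))
        · exact Or.inr (Or.inr (Or.inl (by rw [hvq, h])))
        · exact Or.inr (Or.inr (Or.inr (by rw [hvq, h])))
      · intro hfvE
        rw [hmemE] at hfvE
        simp only [hfdef] at hfvE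
        rw [hmemS] at hvS
        apply hvS
        rw [hmemQ]
        rcases hfvE with h|h|h|h
        · exact Or.inl (haddcancel v 0 (by rw [zero_add]; exact h))
        · exact Or.inr (Or.inl (haddcancel v a h))
        · exact Or.inr (Or.inr (Or.inl (haddcancel v b h)))
        · exact Or.inr (Or.inr (Or.inr (haddcancel v c h)))
    have hTcard : T.card = 2 * (k - 2) := by
      rw [hTdef, Finset.card_sdiff_of_subset hES, hScard, hEcard]
      omega
    obtain ⟨R0, hd0, hp0⟩ := exists_pairs f hff hnf (k-2) T hTclosed hTcard
    have hpairT : ∀ jj, R0 jj ⊆ T := by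
      intro jj
      obtain ⟨v, hv, hveq⟩ := hp0 jj
      rw [hveq]
      intro x hx
      simp only [Finset.mem_insert, Finset.mem_singleton] at hx
      rcases hx with rfl|rfl
      · exact hv
      · exact hTclosed v hv
    set triple : Finset (Fin s → ZMod 2) := {a+u, b+u, c+u} with htrip
    have htripE : triple ⊆ E := by
      intro x hx
      simp only [htrip, Finset.mem_insert, Finset.mem_singleton] at hx
      rw [hmemE]
      rcases hx with rfl|rfl|rfl
      · exact Or.inr (Or.inl rfl)
      · exact Or.inr (Or.inr (Or.inl rfl))
      · exact Or.inr (Or.inr (Or.inr rfl))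
    have huE : u ∈ E := (hmemE u).mpr (Or.inl rfl)
    have hsumtriple : (∑ x ∈ triple, x) = u := by
      rw [htrip]
      rw [Finset.sum_insert (by
        simp only [Finset.mem_insert, Finset.mem_singleton]
        push_neg
        exact ⟨d4, d5⟩)]
      rw [Finset.sum_pair d6]
      have h1 : (b+u) + (c+u) = a := by rw [add_add_add_comm, addself, add_zero, hbca]
      rw [h1, add_right_comm, addself, zero_add]
    set Rab : Fin k → Finset (Fin s → ZMod 2) := fun j =>
      if hlt : (j:ℕ) < k - 2 then R0 ⟨j, hlt⟩ else if (j:ℕ) = k - 2 then {u} else triple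
      with hRab
    have hdisjTu : ∀ P, P ⊆ T → Disjoint P ({u} : Finset _) := by
      intro P hP
      rw [Finset.disjoint_right]
      intro x hx
      simp only [Finset.mem_singleton] at hx
      subst hx
      intro hxP
      exact hTE u (hP hxP) huE
    have hdisjTtrip : ∀ P, P ⊆ T → Disjoint P triple := by
      intro P hP
      rw [Finset.disjoint_right]
      intro x hx hxP
      exact hTE x (hP hxP) (htripE hx)
    have hdisjutrip : Disjoint ({u} : Finset _) triple := by
      rw [Finset.disjoint_left]
      intro x hx
      simp only [Finset.mem_singleton] at hx
      subst hx
      intro hxt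
      simp only [htrip, Finset.mem_insert, Finset.mem_singleton] at hxt
      rcases hxt with h|h|h
      · exact d1 h
      · exact d2 h
      · exact d3 h
    have hRabdisj : ∀ j j', j ≠ j' → Disjoint (Rab j) (Rab j') := by
      intro j j' hjj
      have hjne : (j:ℕ) ≠ (j':ℕ) := fun h => hjj (Fin.ext h)
      have hjlt : (j:ℕ) < k := j.isLt
      have hj'lt : (j':ℕ) < k := j'.isLt
      simp only [hRab]
      by_cases hj : (j:ℕ) < k - 2 <;> by_cases hj' : (j':ℕ) < k - 2
      · rw [dif_pos hj, dif_pos hj']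
        exact hd0 _ _ (fun hcon => hjne (by simpa using congrArg Fin.val hcon))
      · rw [dif_pos hj, dif_neg hj']
        split_ifs with h
        · exact hdisjTu _ (hpairT _)
        · exact hdisjTtrip _ (hpairT _)
      · rw [dif_neg hj, dif_pos hj']
        split_ifs with h
        · exact (hdisjTu _ (hpairT _)).symm
        · exact (hdisjTtrip _ (hpairT _)).symm
      · rw [dif_neg hj, dif_neg hj']
        split_ifs with h1 h2 h2
        · exact absurd (h1.trans h2.symm) hjne
        · exact hdisjutrip
        · exact hdisjutrip.symm
        · exact absurd (Fin.ext (by omega : (j:ℕ) = (j':ℕ))) hjj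
    have hRabsum : ∀ j, (∑ x ∈ Rab j, x) = u ∧ Rab j ⊆ S := by
      intro j
      simp only [hRab]
      split_ifs with h1 h2
      · obtain ⟨v, hv, hveq⟩ := hp0 ⟨(j:ℕ), h1⟩
        constructor
        · rw [hveq, pair_sum]
        · exact (hpairT _).trans hTS
      · constructor
        · exact Finset.sum_singleton _ _
        · intro x hx
          simp only [Finset.mem_singleton] at hx
          subst hx
          exact hES huE
      · exact ⟨hsumtriple, htripE.trans hES⟩
    refine ⟨fun j => Finset.univ.filter (fun h : Fin N => (e.symm h : Fin s → ZMod 2) ∈ Rab j),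
      ?_, ?_⟩
    · intro j j' hjj
      exact liftdisj _ _ (hRabdisj j j' hjj)
    · intro j
      obtain ⟨hsum, hsub⟩ := hRabsum j
      rw [liftsum _ hsub, hsum]

theorem stmt_3 (s : ℕ) (hs : 3 ≤ s) :
    PIRlen s (2 ^ (s - 1) - 2) = 2 ^ s - 4 ∧
    (∃ G : Matrix (Fin s) (Fin (2 ^ s - 4)) (ZMod 2),
      IsPIRMatrix s (2 ^ s - 4) (2 ^ (s - 1) - 2) G) ∧
    ∀ n : ℕ, n < 2 ^ s - 4 → ∀ G : Matrix (Fin s) (Fin n) (ZMod 2),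
      ¬ IsPIRMatrix s n (2 ^ (s - 1) - 2) G := by
  have hub := upper_exists hs
  have hpos : 0 < 2 ^ s - 4 := by
    have h8 : (8:ℕ) ≤ 2 ^ s := by
      calc (8:ℕ) = 2 ^ 3 := rfl
      _ ≤ 2 ^ s := Nat.pow_le_pow_right (by omega) hs
    omega
  have hmem : (2 ^ s - 4) ∈ {n : ℕ | 0 < n ∧
      ∃ G : Matrix (Fin s) (Fin n) (ZMod 2), IsPIRMatrix s n (2 ^ (s - 1) - 2) G} :=
    ⟨hpos, hub⟩
  refine ⟨?_, hub, ?_⟩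
  · apply le_antisymm (Nat.sInf_le hmem)
    apply le_csInf ⟨_, hmem⟩
    rintro n ⟨-, G, hG⟩
    exact lower_bound hs G hG
  · intro n hn G hG
    exact absurd (lower_bound hs G hG) (by omega)
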